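/- arXiv:1403.0519 — 2 statements merged into one kernel-verified Lean document; each statement's English description precedes it below -/
import Mathlib

section
/- Let n be a positive integer and let F, G : ℝ → ℝ be functions that are n times continuously differentiable (F on a neighborhood of x, G on a neighborhood of F(x)). Then the n-th derivative of the composite G ∘ F at x is given by Faà di Bruno's formula: d^n/dx^n (G ∘ F)(x) = Σ (n!/(k₁!·k₂!···k_n!)) · G^{(r)}(F(x)) · ∏_{i=1}^{n} (F^{(i)}(x)/i!)^{k_i}, where the sum ranges over all tuples (k₁,…,k_n) of nonnegative integers satisfying k₁ + 2k₂ + ⋯ + n·k_n = n, and r = k₁ + ⋯ + k_n. -/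
open scoped Nat


noncomputable def Dd (m : Multiset ℕ) : ℝ :=
  (m.map fun j => (j ! : ℝ)).prod * ∏ a ∈ m.toFinset, ((m.count a)! : ℝ)

lemma Dd_pos (m : Multiset ℕ) : 0 < Dd m := by
  apply mul_pos
  · apply Multiset.prod_pos
    intro y hy
    simp only [Multiset.mem_map] at hy
    obtain ⟨j, _, rfl⟩ := hy
    positivity
  · exact Finset.prod_pos fun a _ => by positivity

lemma Cfac_cons (a : ℕ) (m : Multiset ℕ) :
    ∏ b ∈ (a ::ₘ m).toFinset, (((a ::ₘ m).count b)! : ℝ)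
      = ((m.count a : ℝ) + 1) * ∏ b ∈ m.toFinset, ((m.count b)! : ℝ) := by
  by_cases h : a ∈ m
  · rw [Multiset.toFinset_cons, Finset.insert_eq_self.2 (Multiset.mem_toFinset.2 h)]
    rw [← Finset.mul_prod_erase _ _ (Multiset.mem_toFinset.2 h),
      ← Finset.mul_prod_erase _ (fun b => ((m.count b)! : ℝ)) (Multiset.mem_toFinset.2 h)]
    rw [Multiset.count_cons_self, Nat.factorial_succ]
    have : ∏ b ∈ m.toFinset.erase a, (((a ::ₘ m).count b)! : ℝ)
        = ∏ b ∈ m.toFinset.erase a, ((m.count b)! : ℝ) :=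
      Finset.prod_congr rfl fun b hb => by
        rw [Multiset.count_cons_of_ne]
        exact fun hba => (Finset.mem_erase.1 hb).1 (hba ▸ rfl)
    rw [this]
    push_cast
    ring
  · rw [Multiset.toFinset_cons]
    rw [Finset.prod_insert (by simp [h])]
    rw [Multiset.count_cons_self, Multiset.count_eq_zero.2 h]
    simp only [Nat.cast_zero, zero_add, one_mul]
    norm_num
    exact Finset.prod_congr rfl fun b hb => by
      rw [Multiset.count_cons_of_ne]
      rintro rfl
      exact h (Multiset.mem_toFinset.1 hb)

lemma Dd_cons (a : ℕ) (m : Multiset ℕ) :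
    Dd (a ::ₘ m) = (a ! : ℝ) * ((m.count a : ℝ) + 1) * Dd m := by
  rw [Dd, Dd, Multiset.map_cons, Multiset.prod_cons, Cfac_cons]
  ring

theorem lemA (n : ℕ) (F G : ℝ → ℝ) (x : ℝ)
    (hF : ContDiffAt ℝ n F x) (hG : ContDiffAt ℝ n G (F x)) :
    iteratedDeriv n (G ∘ F) x =
      ∑ c : OrderedFinpartition n,
        iteratedDeriv c.length G (F x) * ∏ i, iteratedDeriv (c.partSize i) F x := by
  obtain ⟨t0, ht0, hGt0⟩ := hG.contDiffOn le_rfl (by simp)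
  obtain ⟨s0, hs0, hFs0⟩ := hF.contDiffOn le_rfl (by simp)
  set t : Set ℝ := interior t0 with htdef
  have hto : IsOpen t := isOpen_interior
  have hxt : F x ∈ t := mem_interior_iff_mem_nhds.2 ht0
  have hGt : ContDiffOn ℝ n G t := hGt0.mono interior_subset
  -- F is continuous on interior s0
  have hFs1 : ContDiffOn ℝ n F (interior s0) := hFs0.mono interior_subset
  set s : Set ℝ := interior s0 ∩ F ⁻¹' t with hsdef
  have hso : IsOpen s := by
    exact hFs1.continuousOn.isOpen_inter_preimage isOpen_interior hto
  have hxs : x ∈ s := ⟨mem_interior_iff_mem_nhds.2 hs0, hxt⟩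
  have hFs : ContDiffOn ℝ n F s := hFs1.mono Set.inter_subset_left
  have hmaps : Set.MapsTo F s t := fun y hy => hy.2
  have hp : HasFTaylorSeriesUpToOn n F (ftaylorSeriesWithin ℝ F s) s :=
    hFs.ftaylorSeriesWithin (hso.uniqueDiffOn)
  have hq : HasFTaylorSeriesUpToOn n G (ftaylorSeriesWithin ℝ G t) t :=
    hGt.ftaylorSeriesWithin (hto.uniqueDiffOn)
  have hcomp := hq.comp hp hmaps
  have h1 : iteratedDeriv n (G ∘ F) x
      = iteratedFDerivWithin ℝ n (G ∘ F) s x (fun _ => 1) := by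
    rw [iteratedDeriv_eq_iteratedFDeriv, iteratedFDerivWithin_of_isOpen n hso hxs]
  have h2 : iteratedFDerivWithin ℝ n (G ∘ F) s x
      = ((ftaylorSeriesWithin ℝ G t (F x)).taylorComp (ftaylorSeriesWithin ℝ F s x)) n :=
    (hcomp.eq_iteratedFDerivWithin_of_uniqueDiffOn le_rfl hso.uniqueDiffOn hxs).symm
  rw [h1, h2]
  rw [FormalMultilinearSeries.taylorComp]
  rw [ContinuousMultilinearMap.sum_apply]
  refine Finset.sum_congr rfl fun c _ => ?_
  rw [FormalMultilinearSeries.compAlongOrderedFinpartition_apply]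
  have hps : ∀ m : Fin c.length, (ftaylorSeriesWithin ℝ F s x (c.partSize m))
      (fun _ => (1:ℝ)) = iteratedDeriv (c.partSize m) F x := by
    intro m
    rw [hp.eq_iteratedFDerivWithin_of_uniqueDiffOn (by exact_mod_cast c.partSize_le m)
      hso.uniqueDiffOn hxs, iteratedFDerivWithin_of_isOpen _ hso hxs,
      iteratedDeriv_eq_iteratedFDeriv]
  have hqs : (ftaylorSeriesWithin ℝ G t (F x) c.length) (fun _ => (1:ℝ))
      = iteratedDeriv c.length G (F x) := by
    rw [hq.eq_iteratedFDerivWithin_of_uniqueDiffOn (by exact_mod_cast c.length_le)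
      hto.uniqueDiffOn hxt, iteratedFDerivWithin_of_isOpen _ hto hxt,
      iteratedDeriv_eq_iteratedFDeriv]
  rw [OrderedFinpartition.applyOrderedFinpartition_apply]
  have : (fun m => (ftaylorSeriesWithin ℝ F s x (c.partSize m))
        ((fun _ => (1:ℝ)) ∘ c.emb m))
      = fun m => (iteratedDeriv (c.partSize m) F x) • (1:ℝ) := by
    ext m
    rw [smul_eq_mul, mul_one, ← hps m]
    congr 1
  rw [this, (ftaylorSeriesWithin ℝ G t (F x) c.length).map_smul_univ
    (fun m => iteratedDeriv (c.partSize m) F x) (fun _ => (1:ℝ))]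
  rw [hqs]
  simp [mul_comm]

def Mp {n : ℕ} (c : OrderedFinpartition n) : Multiset ℕ :=
  Finset.univ.val.map c.partSize

lemma Mp_sum {n : ℕ} (c : OrderedFinpartition n) : (Mp c).sum = n := by
  have := Fintype.card_congr c.equivSigma
  simp only [Fintype.card_sigma, Fintype.card_fin] at this
  simpa [Mp, Finset.sum] using this

lemma Mp_pos {n : ℕ} (c : OrderedFinpartition n) : ∀ i ∈ Mp c, 0 < i := by
  intro i hi
  simp only [Mp, Multiset.mem_map] at hi
  obtain ⟨j, _, rfl⟩ := hi
  exact c.partSize_pos j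

lemma Mp_card {n : ℕ} (c : OrderedFinpartition n) : (Mp c).card = c.length := by
  simp [Mp]

lemma Mp_extendLeft {n : ℕ} (c : OrderedFinpartition n) :
    Mp c.extendLeft = 1 ::ₘ Mp c := by
  show Finset.univ.val.map (Fin.cons 1 c.partSize) = 1 ::ₘ Mp c
  rw [Fin.univ_succ, Finset.cons_val, Multiset.map_cons]
  simp [Mp, Multiset.map_map, Function.comp_def]

lemma Mp_extendMiddle {n : ℕ} (c : OrderedFinpartition n) (k : Fin c.length) :
    Mp (c.extendMiddle k) = (c.partSize k + 1) ::ₘ (Mp c).erase (c.partSize k) := by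
  show Finset.univ.val.map (Function.update c.partSize k (c.partSize k + 1)) = _
  have huniv : (Finset.univ : Finset (Fin c.length)).val = k ::ₘ (Finset.univ.erase k).val := by
    have := Finset.insert_val_of_notMem (s := Finset.univ.erase k) (a := k) (by simp)
    rw [Finset.insert_erase (Finset.mem_univ k)] at this
    exact this
  have herase : ∀ f : Fin c.length → ℕ,
      Finset.univ.val.map f = f k ::ₘ (Finset.univ.erase k).val.map f := by
    intro f; rw [huniv, Multiset.map_cons]
  simp only [Mp]
  rw [herase, herase c.partSize]
  rw [Multiset.erase_cons_head]
  simp only [Function.update_self]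
  congr 1
  exact Multiset.map_congr rfl fun i hi => Function.update_of_ne
    (by simpa using (Finset.mem_erase.1 (show i ∈ (Finset.univ : Finset (Fin c.length)).erase k from hi)).1) _ _

lemma sum_fin_eq_map_sum {n : ℕ} (c : OrderedFinpartition n) (v : ℕ → ℝ) :
    ∑ i, v (c.partSize i) = ((Mp c).map v).sum := by
  simp [Mp, Multiset.map_map, Finset.sum, Function.comp_def]

lemma mem_le_sum {m : Multiset ℕ} {a : ℕ} (h : a ∈ m) : a ≤ m.sum :=
  Multiset.single_le_sum (fun _ _ => Nat.zero_le _) _ h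

lemma sum_eq_single_partition {n : ℕ} (m : Multiset ℕ) (hsum : m.sum = n)
    (hpos : ∀ i ∈ m, 0 < i) (w : Multiset ℕ → ℝ) :
    ∑ q : Nat.Partition n, (if q.parts = m then w q.parts else 0) = w m := by
  rw [Fintype.sum_eq_single (⟨m, fun {i} hi => hpos i hi, hsum⟩ : Nat.Partition n)]
  · simp
  · intro q hq
    rw [if_neg]
    intro hqm
    exact hq (Nat.Partition.ext hqm)

lemma count_mul_sum (N : ℕ) (m : Multiset ℕ) (hsub : ∀ a ∈ m, a < N) :
    ∑ j ∈ Finset.range N, j * m.count j = m.sum := by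
  have h1 : m.sum = (m.map id).sum := by simp
  rw [h1, Finset.sum_multiset_map_count]
  rw [Finset.sum_subset (fun a ha => Finset.mem_range.2 (hsub a (Multiset.mem_toFinset.1 ha)))]
  · exact Finset.sum_congr rfl fun j _ => by simp [mul_comm]
  · intro a _ ha
    simp [Multiset.count_eq_zero.2 fun hm => ha (Multiset.mem_toFinset.2 hm)]

lemma stepA (n : ℕ) (q : Nat.Partition (n + 1)) (A : Multiset ℕ → ℝ) :
    ∑ p : Nat.Partition n, (if q.parts = 1 ::ₘ p.parts then A p.parts else 0)
      = if 1 ∈ q.parts then A (q.parts.erase 1) else 0 := by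
  by_cases h1 : 1 ∈ q.parts
  · have hpos : ∀ i ∈ q.parts.erase 1, 0 < i := fun i hi =>
      q.parts_pos (Multiset.mem_of_mem_erase hi)
    have hsum : (q.parts.erase 1).sum = n := by
      have h2 := q.parts_sum
      rw [(Multiset.cons_erase h1).symm, Multiset.sum_cons] at h2
      omega
    rw [if_pos h1, Fintype.sum_eq_single
      (⟨q.parts.erase 1, fun {i} hi => hpos i hi, hsum⟩ : Nat.Partition n)]
    · rw [if_pos (Multiset.cons_erase h1).symm]
    · intro p hp
      rw [if_neg]
      intro hc
      apply hp
      apply Nat.Partition.ext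
      exact (Multiset.cons_inj_right 1).1 (by rw [← hc]; exact (Multiset.cons_erase h1).symm)
  · rw [if_neg h1]
    apply Finset.sum_eq_zero
    intro p _
    rw [if_neg]
    intro hc
    exact h1 (hc ▸ Multiset.mem_cons_self 1 _)

lemma stepB (n : ℕ) (q : Nat.Partition (n + 1)) (s : ℕ) (A : Multiset ℕ → ℝ) :
    ∑ p : Nat.Partition n,
        (if q.parts = (s+1) ::ₘ p.parts.erase s then (p.parts.count s : ℝ) * A p.parts else 0)
      = if 0 < s ∧ s + 1 ∈ q.parts then
          (((q.parts.erase (s+1)).count s : ℝ) + 1) * A (s ::ₘ q.parts.erase (s+1)) else 0 := by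
  by_cases h : 0 < s ∧ s + 1 ∈ q.parts
  · obtain ⟨hs, hmem⟩ := h
    have hq : q.parts = (s+1) ::ₘ q.parts.erase (s+1) := (Multiset.cons_erase hmem).symm
    have hpos : ∀ i ∈ s ::ₘ q.parts.erase (s+1), 0 < i := by
      intro i hi
      rcases Multiset.mem_cons.1 hi with rfl | hi
      · exact hs
      · exact q.parts_pos (Multiset.mem_of_mem_erase hi)
    have hsum : (s ::ₘ q.parts.erase (s+1)).sum = n := by
      have h2 := q.parts_sum
      rw [hq, Multiset.sum_cons] at h2
      rw [Multiset.sum_cons]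
      omega
    rw [if_pos ⟨hs, hmem⟩, Fintype.sum_eq_single
      (⟨s ::ₘ q.parts.erase (s+1), fun {i} hi => hpos i hi, hsum⟩ : Nat.Partition n)]
    · rw [if_pos]
      · simp
      · show q.parts = (s+1) ::ₘ (s ::ₘ q.parts.erase (s+1)).erase s
        rw [Multiset.erase_cons_head]
        exact hq
    · intro p hp
      rw [if_neg]
      intro hc
      by_cases hsp : s ∈ p.parts
      · apply hp
        apply Nat.Partition.ext
        show p.parts = s ::ₘ q.parts.erase (s+1)
        have h3 : q.parts.erase (s+1) = p.parts.erase s := by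
          rw [hc, Multiset.erase_cons_head]
        rw [h3, Multiset.cons_erase hsp]
      · rw [Multiset.erase_of_notMem hsp] at hc
        have h4 := q.parts_sum
        rw [hc, Multiset.sum_cons, p.parts_sum] at h4
        omega
  · rw [if_neg h]
    apply Finset.sum_eq_zero
    intro p _
    by_cases hs : 0 < s
    · rw [if_neg]
      intro hc
      exact h ⟨hs, hc ▸ Multiset.mem_cons_self _ _⟩
    · have hs0 : s = 0 := by omega
      subst hs0
      have hc0 : p.parts.count 0 = 0 :=
        Multiset.count_eq_zero.2 (fun hm => absurd (p.parts_pos hm) (by omega))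
      split <;> simp [hc0]

lemma coeff_identity (n : ℕ) (q : Nat.Partition (n + 1)) :
    (if 1 ∈ q.parts then (n ! : ℝ) / Dd (q.parts.erase 1) else 0)
      + ∑ s ∈ Finset.range (n + 2), (if 0 < s ∧ s + 1 ∈ q.parts then
          (((q.parts.erase (s+1)).count s : ℝ) + 1) * ((n ! : ℝ) / Dd (s ::ₘ q.parts.erase (s+1)))
          else 0)
      = (((n+1)! : ℕ) : ℝ) / Dd q.parts := by
  have hDq := Dd_pos q.parts
  -- first term
  have hfirst : (if 1 ∈ q.parts then (n ! : ℝ) / Dd (q.parts.erase 1) else 0)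
      = (n ! : ℝ) * (q.parts.count 1 : ℝ) / Dd q.parts := by
    by_cases h1 : 1 ∈ q.parts
    · rw [if_pos h1]
      have hE := Dd_pos (q.parts.erase 1)
      have h2 : Dd q.parts
          = (1! : ℝ) * (((q.parts.erase 1).count 1 : ℝ) + 1) * Dd (q.parts.erase 1) := by
        conv_lhs => rw [show q.parts = 1 ::ₘ q.parts.erase 1 from (Multiset.cons_erase h1).symm]
        exact Dd_cons 1 _
      have h3 : ((q.parts.erase 1).count 1 : ℕ) + 1 = q.parts.count 1 := by
        have h4 := Multiset.count_erase_self 1 q.parts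
        have h5 := Multiset.count_pos.2 h1
        omega
      have h3' : ((q.parts.erase 1).count 1 : ℝ) + 1 = (q.parts.count 1 : ℝ) := by
        exact_mod_cast congrArg (Nat.cast : ℕ → ℝ) h3
      rw [h3'] at h2
      have hc1 : (0:ℝ) < (q.parts.count 1 : ℝ) := by
        exact_mod_cast Multiset.count_pos.2 h1
      rw [h2]
      rw [Nat.factorial_one, Nat.cast_one, one_mul]
      field_simp
    · rw [if_neg h1, Multiset.count_eq_zero.2 h1]
      simp
  -- s-terms for 0 < s
  have hterm : ∀ s : ℕ, 0 < s → (if 0 < s ∧ s + 1 ∈ q.parts then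
          (((q.parts.erase (s+1)).count s : ℝ) + 1) * ((n ! : ℝ) / Dd (s ::ₘ q.parts.erase (s+1)))
          else 0)
      = (n ! : ℝ) * (((s+1) : ℝ) * (q.parts.count (s+1) : ℝ)) / Dd q.parts := by
    intro s hs
    by_cases hm : s + 1 ∈ q.parts
    · rw [if_pos ⟨hs, hm⟩]
      set E := q.parts.erase (s+1) with hEdef
      have hE := Dd_pos E
      have h1 : Dd q.parts = (((s+1)! : ℕ) : ℝ) * ((E.count (s+1) : ℝ) + 1) * Dd E := by
        conv_lhs => rw [show q.parts = (s+1) ::ₘ E from (Multiset.cons_erase hm).symm]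
        exact Dd_cons (s+1) E
      have h2 : Dd (s ::ₘ E) = ((s ! : ℕ) : ℝ) * ((E.count s : ℝ) + 1) * Dd E := Dd_cons s E
      have h3 : (E.count (s+1) : ℕ) + 1 = q.parts.count (s+1) := by
        have h4 : E.count (s+1) = q.parts.count (s+1) - 1 := by
          rw [hEdef]; exact Multiset.count_erase_self _ _
        have h5 := Multiset.count_pos.2 hm
        omega
      have h3' : ((E.count (s+1) : ℝ)) + 1 = (q.parts.count (s+1) : ℝ) := by
        exact_mod_cast congrArg (Nat.cast : ℕ → ℝ) h3
      rw [h3'] at h1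
      have hfac : (((s+1)! : ℕ) : ℝ) = ((s:ℝ)+1) * ((s ! : ℕ) : ℝ) := by
        push_cast [Nat.factorial_succ]
        ring
      have hc : (0:ℝ) < (q.parts.count (s+1) : ℝ) := by
        exact_mod_cast Multiset.count_pos.2 hm
      have hcs : (0:ℝ) < (E.count s : ℝ) + 1 := by positivity
      have hsf : (0:ℝ) < ((s ! : ℕ) : ℝ) := by exact_mod_cast Nat.factorial_pos s
      rw [h1, h2, hfac]
      field_simp
    · rw [if_neg (fun hh => hm hh.2), Multiset.count_eq_zero.2 hm]
      simp
  -- sum identity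
  have hsub : ∀ a ∈ q.parts, a < n + 3 := fun a ha => by
    have := mem_le_sum ha
    rw [q.parts_sum] at this
    omega
  have hsumnat : q.parts.count 1 + ∑ i ∈ Finset.range (n+1), (i+2) * q.parts.count (i+2)
      = n + 1 := by
    have h0 := count_mul_sum (n+3) q.parts hsub
    rw [q.parts_sum, Finset.sum_range_succ' _ (n+2), Finset.sum_range_succ' _ (n+1)] at h0
    have hc : ∑ i ∈ Finset.range (n+1), (i+2) * q.parts.count (i+2)
        = ∑ k ∈ Finset.range (n+1), (k+1+1) * q.parts.count (k+1+1) := by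
      apply Finset.sum_congr rfl
      intro i _
      norm_num
    simp only [zero_add, zero_mul, one_mul, add_zero] at h0
    omega
  rw [hfirst, Finset.sum_range_succ' _ (n+1)]
  rw [Finset.sum_congr rfl (fun i (_ : i ∈ Finset.range (n+1)) => hterm (i+1) (by omega))]
  rw [if_neg (by simp)]
  rw [add_zero, ← Finset.sum_div, ← Finset.mul_sum, ← add_div]
  have hcast : (((n+1)! : ℕ) : ℝ) = ((n:ℝ)+1) * ((n ! : ℕ) : ℝ) := by
    push_cast [Nat.factorial_succ]
    ring
  rw [hcast]
  congr 1
  have h3 : ∑ i ∈ Finset.range (n+1),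
        ((((i+1 : ℕ) : ℝ))+1) * ((q.parts.count (i+1+1) : ℕ) : ℝ)
      = ∑ i ∈ Finset.range (n+1),
          ((((i : ℕ) : ℝ))+2) * ((q.parts.count (i+2) : ℕ) : ℝ) := by
    apply Finset.sum_congr rfl
    intro i _
    have e : i+1+1 = i+2 := by omega
    rw [e]
    push_cast
    ring
  have hS := congrArg (Nat.cast (R := ℝ)) hsumnat
  push_cast at hS
  rw [h3, ← hS]
  ring

lemma partition_zero_parts (q : Nat.Partition 0) : q.parts = 0 := by
  rw [Multiset.eq_zero_iff_forall_notMem]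
  intro a ha
  have h1 := q.parts_pos ha
  have h2 := mem_le_sum ha
  rw [q.parts_sum] at h2
  omega

theorem key (n : ℕ) (u : Multiset ℕ → ℝ) :
    ∑ c : OrderedFinpartition n, u (Mp c)
      = ∑ p : Nat.Partition n, ((n ! : ℕ) : ℝ) / Dd p.parts * u p.parts := by
  induction n generalizing u with
  | zero =>
    rw [Fintype.sum_subsingleton _ (default : OrderedFinpartition 0),
      Fintype.sum_subsingleton _ (default : Nat.Partition 0)]
    have h1 : Mp (default : OrderedFinpartition 0) = 0 := by
      simp [Mp]
    have h2 : (default : Nat.Partition 0).parts = 0 := partition_zero_parts _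
    rw [h1, h2]
    simp [Dd]
  | succ n IH =>
    classical
    have e1 : ∑ c : OrderedFinpartition (n+1), u (Mp c)
        = ∑ x : Σ c : OrderedFinpartition n, Option (Fin c.length),
            u (Mp (x.1.extend x.2)) :=
      (Fintype.sum_equiv (OrderedFinpartition.extendEquiv n)
        (fun x => u (Mp (x.1.extend x.2))) (fun c => u (Mp c)) (fun x => rfl)).symm
    rw [e1, ← Finset.univ_sigma_univ, Finset.sum_sigma]
    have e2 : ∀ c : OrderedFinpartition n,
        ∑ o : Option (Fin c.length), u (Mp (c.extend o))
          = u (1 ::ₘ Mp c)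
            + ((Mp c).map fun s => u ((s+1) ::ₘ (Mp c).erase s)).sum := by
      intro c
      rw [Fintype.sum_option]
      congr 1
      · rw [show c.extend none = c.extendLeft from rfl, Mp_extendLeft]
      · rw [← sum_fin_eq_map_sum c (fun s => u ((s+1) ::ₘ (Mp c).erase s))]
        apply Finset.sum_congr rfl
        intro i _
        rw [show c.extend (some i) = c.extendMiddle i from rfl, Mp_extendMiddle]
    rw [Finset.sum_congr rfl (fun c _ => e2 c), Finset.sum_add_distrib]
    have i1 := IH (fun m => u (1 ::ₘ m))
    have i2 := IH (fun m => (Multiset.map (fun s => u ((s + 1) ::ₘ m.erase s)) m).sum)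
    beta_reduce at i1 i2
    rw [i1, i2]
    -- second piece: expand the multiset sum as a count sum over range (n+2)
    have e3 : ∀ p : Nat.Partition n,
        ((p.parts.map fun s => u ((s+1) ::ₘ p.parts.erase s)).sum : ℝ)
          = ∑ s ∈ Finset.range (n+2), (p.parts.count s : ℝ) * u ((s+1) ::ₘ p.parts.erase s) := by
      intro p
      rw [Finset.sum_multiset_map_count]
      have hsubp : p.parts.toFinset ⊆ Finset.range (n+2) := by
        intro a ha
        have h9 := mem_le_sum (Multiset.mem_toFinset.1 ha)
        rw [p.parts_sum] at h9
        exact Finset.mem_range.2 (by omega)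
      rw [Finset.sum_subset hsubp]
      · exact Finset.sum_congr rfl fun j _ => by simp [nsmul_eq_mul]
      · intro a _ ha
        simp [Multiset.count_eq_zero.2 fun hm => ha (Multiset.mem_toFinset.2 hm)]
    -- replacement lemmas
    have rep1 : ∀ p : Nat.Partition n,
        u (1 ::ₘ p.parts) = ∑ q : Nat.Partition (n+1),
          (if q.parts = 1 ::ₘ p.parts then u q.parts else 0) := by
      intro p
      refine (sum_eq_single_partition _ ?_ ?_ u).symm
      · rw [Multiset.sum_cons, p.parts_sum]
        omega
      · intro i hi
        rcases Multiset.mem_cons.1 hi with rfl | hi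
        · omega
        · exact p.parts_pos hi
    have rep2 : ∀ (p : Nat.Partition n) (s : ℕ),
        (p.parts.count s : ℝ) * u ((s+1) ::ₘ p.parts.erase s)
          = ∑ q : Nat.Partition (n+1),
              (if q.parts = (s+1) ::ₘ p.parts.erase s
                then (p.parts.count s : ℝ) * u q.parts else 0) := by
      intro p s
      by_cases hsp : s ∈ p.parts
      · refine (sum_eq_single_partition _ ?_ ?_
          (fun m => (p.parts.count s : ℝ) * u m)).symm
        · have h1 := p.parts_sum
          conv_lhs at h1 => rw [show p.parts = s ::ₘ p.parts.erase s
            from (Multiset.cons_erase hsp).symm]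
          rw [Multiset.sum_cons] at h1
          rw [Multiset.sum_cons]
          omega
        · intro i hi
          rcases Multiset.mem_cons.1 hi with rfl | hi
          · omega
          · exact p.parts_pos (Multiset.mem_of_mem_erase hi)
      · rw [Multiset.count_eq_zero.2 hsp]
        simp
    -- rewrite both pieces through the replacement and swap sums
    have piece1 : ∑ p : Nat.Partition n, ((n ! : ℕ) : ℝ) / Dd p.parts * u (1 ::ₘ p.parts)
        = ∑ q : Nat.Partition (n+1),
            (if 1 ∈ q.parts then ((n ! : ℕ) : ℝ) / Dd (q.parts.erase 1) else 0) * u q.parts := by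
      calc ∑ p : Nat.Partition n, ((n ! : ℕ) : ℝ) / Dd p.parts * u (1 ::ₘ p.parts)
          = ∑ p : Nat.Partition n, ∑ q : Nat.Partition (n+1),
              (if q.parts = 1 ::ₘ p.parts
                then ((n ! : ℕ) : ℝ) / Dd p.parts * u q.parts else 0) := by
            apply Finset.sum_congr rfl
            intro p _
            rw [rep1 p, Finset.mul_sum]
            apply Finset.sum_congr rfl
            intro q _
            rw [mul_ite, mul_zero]
        _ = ∑ q : Nat.Partition (n+1), ∑ p : Nat.Partition n,
              (if q.parts = 1 ::ₘ p.parts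
                then (((n ! : ℕ) : ℝ) / Dd p.parts * u q.parts) else 0) := Finset.sum_comm
        _ = ∑ q : Nat.Partition (n+1),
            (if 1 ∈ q.parts then ((n ! : ℕ) : ℝ) / Dd (q.parts.erase 1) * u q.parts else 0) := by
            apply Finset.sum_congr rfl
            intro q _
            exact stepA n q (fun m => ((n ! : ℕ) : ℝ) / Dd m * u q.parts)
        _ = _ := by
            apply Finset.sum_congr rfl
            intro q _
            split <;> simp
    have piece2 : ∑ p : Nat.Partition n, ((n ! : ℕ) : ℝ) / Dd p.parts *
          ((p.parts.map fun s => u ((s+1) ::ₘ p.parts.erase s)).sum : ℝ)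
        = ∑ q : Nat.Partition (n+1),
            (∑ s ∈ Finset.range (n+2), (if 0 < s ∧ s + 1 ∈ q.parts then
              (((q.parts.erase (s+1)).count s : ℝ) + 1) *
                (((n ! : ℕ) : ℝ) / Dd (s ::ₘ q.parts.erase (s+1))) else 0)) * u q.parts := by
      calc ∑ p : Nat.Partition n, ((n ! : ℕ) : ℝ) / Dd p.parts *
              ((p.parts.map fun s => u ((s+1) ::ₘ p.parts.erase s)).sum : ℝ)
          = ∑ p : Nat.Partition n, ∑ s ∈ Finset.range (n+2), ∑ q : Nat.Partition (n+1),
              (if q.parts = (s+1) ::ₘ p.parts.erase s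
                then ((n ! : ℕ) : ℝ) / Dd p.parts * ((p.parts.count s : ℝ) * u q.parts)
                else 0) := by
            apply Finset.sum_congr rfl
            intro p _
            rw [e3 p, Finset.mul_sum]
            apply Finset.sum_congr rfl
            intro s _
            rw [rep2 p s, Finset.mul_sum]
            apply Finset.sum_congr rfl
            intro q _
            rw [mul_ite, mul_zero]
        _ = ∑ s ∈ Finset.range (n+2), ∑ q : Nat.Partition (n+1), ∑ p : Nat.Partition n,
              (if q.parts = (s+1) ::ₘ p.parts.erase s
                then ((n ! : ℕ) : ℝ) / Dd p.parts * ((p.parts.count s : ℝ) * u q.parts)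
                else 0) := by
            rw [Finset.sum_comm]
            apply Finset.sum_congr rfl
            intro s _
            rw [Finset.sum_comm]
        _ = ∑ q : Nat.Partition (n+1), ∑ s ∈ Finset.range (n+2), ∑ p : Nat.Partition n,
              (if q.parts = (s+1) ::ₘ p.parts.erase s
                then ((n ! : ℕ) : ℝ) / Dd p.parts * ((p.parts.count s : ℝ) * u q.parts)
                else 0) := Finset.sum_comm
        _ = ∑ q : Nat.Partition (n+1), ∑ s ∈ Finset.range (n+2),
              (if 0 < s ∧ s + 1 ∈ q.parts then
                (((q.parts.erase (s+1)).count s : ℝ) + 1) *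
                  (((n ! : ℕ) : ℝ) / Dd (s ::ₘ q.parts.erase (s+1)) * u q.parts) else 0) := by
            apply Finset.sum_congr rfl
            intro q _
            apply Finset.sum_congr rfl
            intro s _
            rw [← stepB n q s (fun m => ((n ! : ℕ) : ℝ) / Dd m * u q.parts)]
            apply Finset.sum_congr rfl
            intro p _
            congr 1
            ring
        _ = _ := by
            apply Finset.sum_congr rfl
            intro q _
            rw [Finset.sum_mul]
            apply Finset.sum_congr rfl
            intro s _
            split <;> simp <;> ring
    rw [piece1, piece2, ← Finset.sum_add_distrib]
    apply Finset.sum_congr rfl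
    intro q _
    rw [← add_mul, coeff_identity n q]

def mkParts (n : ℕ) (k : Fin n → ℕ) : Multiset ℕ := ∑ i, Multiset.replicate (k i) (i.1+1)

lemma mkParts_count (n : ℕ) (k : Fin n → ℕ) (i : Fin n) :
    (mkParts n k).count (i.1+1) = k i := by
  rw [mkParts, Multiset.count_sum']
  rw [Finset.sum_congr rfl (fun i' (_ : i' ∈ Finset.univ) => Multiset.count_replicate _ _ _)]
  have : ∀ i' : Fin n, (if (i'.1+1 : ℕ) = i.1+1 then k i' else 0)
      = if i' = i then k i' else 0 := by
    intro i'
    congr 1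
    simp only [eq_iff_iff]
    constructor
    · intro h
      exact Fin.val_injective (by omega)
    · rintro rfl
      rfl
  rw [Finset.sum_congr rfl (fun i' _ => this i')]
  simp
  
lemma mkParts_count_ne (n : ℕ) (k : Fin n → ℕ) (m : ℕ) (hm : ∀ i : Fin n, m ≠ i.1+1) :
    (mkParts n k).count m = 0 := by
  rw [mkParts, Multiset.count_sum']
  apply Finset.sum_eq_zero
  intro i _
  rw [Multiset.count_replicate, if_neg (fun h => hm i (by omega))]

lemma mkParts_sum (n : ℕ) (k : Fin n → ℕ) : (mkParts n k).sum = ∑ i, k i * (i.1+1) := by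
  rw [mkParts]
  induction (Finset.univ : Finset (Fin n)) using Finset.cons_induction with
  | empty => simp
  | cons a s ha ih => rw [Finset.sum_cons, Finset.sum_cons, Multiset.sum_add, ih,
      Multiset.sum_replicate, smul_eq_mul]

lemma mkParts_pos (n : ℕ) (k : Fin n → ℕ) : ∀ a ∈ mkParts n k, 0 < a := by
  intro a ha
  rw [mkParts, Multiset.mem_sum] at ha
  obtain ⟨i, _, hi⟩ := ha
  rw [Multiset.eq_of_mem_replicate hi]
  omega

lemma parts_count_zero {n : ℕ} (p : Nat.Partition n) : p.parts.count 0 = 0 :=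
  Multiset.count_eq_zero.2 fun hm => absurd (p.parts_pos hm) (by omega)

lemma parts_toFinset_sub {n : ℕ} (p : Nat.Partition n) :
    p.parts.toFinset ⊆ Finset.range (n+1) := by
  intro a ha
  have := mem_le_sum (Multiset.mem_toFinset.1 ha)
  rw [p.parts_sum] at this
  exact Finset.mem_range.2 (by omega)

lemma partition_sum_counts {n : ℕ} (p : Nat.Partition n) :
    ∑ i : Fin n, (i.1+1) * p.parts.count (i.1+1) = n := by
  have h0 := count_mul_sum (n+1) p.parts
    (fun a ha => Finset.mem_range.1 (parts_toFinset_sub p (Multiset.mem_toFinset.2 ha)))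
  rw [p.parts_sum, Finset.sum_range_succ' _ n] at h0
  rw [Fin.sum_univ_eq_sum_range (fun i => (i+1) * p.parts.count (i+1)) n]
  omega

lemma partition_card_counts {n : ℕ} (p : Nat.Partition n) :
    p.parts.card = ∑ i : Fin n, p.parts.count (i.1+1) := by
  have h0 := Multiset.toFinset_sum_count_eq p.parts
  rw [Finset.sum_subset (parts_toFinset_sub p) (fun a _ ha =>
    Multiset.count_eq_zero.2 fun hm => ha (Multiset.mem_toFinset.2 hm))] at h0
  rw [Finset.sum_range_succ' _ n, parts_count_zero p] at h0
  rw [Fin.sum_univ_eq_sum_range (fun i => p.parts.count (i+1)) n]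
  omega

lemma partition_prod_pow {n : ℕ} (p : Nat.Partition n) (w : ℕ → ℝ) :
    (p.parts.map w).prod = ∏ i : Fin n, w (i.1+1) ^ p.parts.count (i.1+1) := by
  rw [Finset.prod_multiset_map_count]
  rw [Finset.prod_subset (parts_toFinset_sub p) (fun a _ ha => by
    rw [Multiset.count_eq_zero.2 fun hm => ha (Multiset.mem_toFinset.2 hm), pow_zero])]
  rw [Finset.prod_range_succ' _ n, parts_count_zero p, pow_zero, mul_one]
  rw [Fin.prod_univ_eq_prod_range (fun i => w (i+1) ^ p.parts.count (i+1)) n]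

lemma partition_cfac {n : ℕ} (p : Nat.Partition n) :
    ∏ a ∈ p.parts.toFinset, (((p.parts.count a)! : ℕ) : ℝ)
      = ∏ i : Fin n, (((p.parts.count (i.1+1))! : ℕ) : ℝ) := by
  rw [Finset.prod_subset (parts_toFinset_sub p) (fun a _ ha => by
    rw [Multiset.count_eq_zero.2 fun hm => ha (Multiset.mem_toFinset.2 hm)]
    simp)]
  rw [Finset.prod_range_succ' _ n, parts_count_zero p]
  rw [Fin.prod_univ_eq_prod_range (fun i => (((p.parts.count (i+1))! : ℕ) : ℝ)) n]
  simp

lemma Dd_partition {n : ℕ} (p : Nat.Partition n) :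
    Dd p.parts = (∏ i : Fin n, ((((i.1+1)! : ℕ)) : ℝ) ^ p.parts.count (i.1+1))
      * ∏ i : Fin n, (((p.parts.count (i.1+1))! : ℕ) : ℝ) := by
  rw [Dd, partition_prod_pow p (fun j => ((j ! : ℕ) : ℝ)), partition_cfac p]

theorem conv (n : ℕ) (f g : ℕ → ℝ) :
    ∑ p : Nat.Partition n, ((n ! : ℕ) : ℝ) / Dd p.parts * (f (p.parts.card) * (p.parts.map g).prod)
      = ∑ k ∈ (Fintype.piFinset fun _ : Fin n => Finset.range (n + 1)).filter
          (fun k : Fin n → ℕ => ∑ i, (i.1 + 1) * k i = n),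
        ((n ! : ℝ) / ((∏ i, (k i)! : ℕ) : ℝ)) * f (∑ i, k i) *
          ∏ i, (g (i.1 + 1) / (((i.1 + 1)! : ℕ) : ℝ)) ^ k i := by
  refine Finset.sum_bij' (i := fun p _ => fun i : Fin n => p.parts.count (i.1+1))
    (j := fun k hk => ⟨mkParts n k, fun {a} ha => mkParts_pos n k a ha, ?_⟩)
    ?_ ?_ ?_ ?_ ?_
  · -- parts_sum for mkParts
    rw [mkParts_sum]
    exact (Finset.sum_congr rfl fun i _ => mul_comm _ _).trans (Finset.mem_filter.1 hk).2
  · -- hi : counts land in the filter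
    intro p _
    rw [Finset.mem_filter]
    constructor
    · rw [Fintype.mem_piFinset]
      intro i
      rw [Finset.mem_range]
      have h1 : (i.1+1) * p.parts.count (i.1+1) ≤ n := by
        have := partition_sum_counts p
        calc (i.1+1) * p.parts.count (i.1+1)
            ≤ ∑ j : Fin n, (j.1+1) * p.parts.count (j.1+1) :=
              Finset.single_le_sum (f := fun j : Fin n => (j.1+1) * p.parts.count (j.1+1))
                (fun j _ => Nat.zero_le _) (Finset.mem_univ i)
          _ = n := this
      nlinarith [Nat.succ_le_of_lt i.2]
    · exact partition_sum_counts p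
  · -- hj : trivial membership
    intro k hk
    exact Finset.mem_univ _
  · -- left_inv : mkParts of counts = parts
    intro p _
    apply Nat.Partition.ext
    show mkParts n (fun i => p.parts.count (i.1+1)) = p.parts
    ext m
    rcases Nat.eq_zero_or_pos m with rfl | hm
    · rw [parts_count_zero p, mkParts_count_ne n _ 0 (fun i => by omega)]
    · by_cases hmn : m ≤ n
      · have : m = (⟨m-1, by omega⟩ : Fin n).1 + 1 := by simp; omega
        rw [this, mkParts_count n _ ⟨m-1, by omega⟩]
      · rw [mkParts_count_ne n _ m (fun i => by have := i.2; omega)]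
        symm
        rw [Multiset.count_eq_zero]
        intro hmem
        have := mem_le_sum hmem
        rw [p.parts_sum] at this
        omega
  · -- right_inv
    intro k hk
    funext i
    exact mkParts_count n k i
  · -- values
    intro p _
    have hcard := partition_card_counts p
    have hprod := partition_prod_pow p g
    have hDd := Dd_partition p
    rw [hcard, hprod, hDd]
    have hA : (0:ℝ) < ∏ i : Fin n, ((((i.1+1)! : ℕ)) : ℝ) ^ p.parts.count (i.1+1) := by
      apply Finset.prod_pos
      intro i _
      apply pow_pos
      exact_mod_cast Nat.factorial_pos _
    have hB : (0:ℝ) < ∏ i : Fin n, (((p.parts.count (i.1+1))! : ℕ) : ℝ) := by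
      apply Finset.prod_pos
      intro i _
      exact_mod_cast Nat.factorial_pos _
    have hprodcast : ((∏ i : Fin n, (p.parts.count (i.1+1))! : ℕ) : ℝ)
        = ∏ i : Fin n, (((p.parts.count (i.1+1))! : ℕ) : ℝ) := by push_cast; rfl
    rw [hprodcast]
    beta_reduce
    simp only [div_pow]
    rw [Finset.prod_div_distrib]
    rw [div_eq_mul_inv, div_eq_mul_inv, div_eq_mul_inv, mul_inv]
    ring

lemma prod_fin_eq_map_prod {n : ℕ} (c : OrderedFinpartition n) (v : ℕ → ℝ) :
    ∏ i, v (c.partSize i) = ((Mp c).map v).prod := by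
  simp [Mp, Multiset.map_map, Finset.prod, Function.comp_def]


/-- **Faà di Bruno's formula.** If `F` is `n` times continuously differentiable near `x`
and `G` is `n` times continuously differentiable near `F x`, then the `n`-th derivative
of `G ∘ F` at `x` is given by the sum, over all tuples `(k₁, …, kₙ)` of nonnegative
integers with `k₁ + 2k₂ + ⋯ + n·kₙ = n`, of
`(n! / (k₁!⋯kₙ!)) · G⁽ʳ⁾(F x) · ∏ᵢ (F⁽ⁱ⁾(x)/i!)^{kᵢ}` where `r = k₁ + ⋯ + kₙ`. -/
theorem faa_di_bruno (n : ℕ) (hn : 0 < n) (F G : ℝ → ℝ) (x : ℝ)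
    (hF : ContDiffAt ℝ n F x) (hG : ContDiffAt ℝ n G (F x)) :
    iteratedDeriv n (G ∘ F) x =
      ∑ k ∈ (Fintype.piFinset fun _ : Fin n => Finset.range (n + 1)).filter
          (fun k : Fin n → ℕ => ∑ i, (i.1 + 1) * k i = n),
        ((n ! : ℝ) / ((∏ i, (k i)! : ℕ) : ℝ)) *
          iteratedDeriv (∑ i, k i) G (F x) *
          ∏ i, (iteratedDeriv (i.1 + 1) F x / ((i.1 + 1)! : ℝ)) ^ k i := by
  rw [lemA n F G x hF hG]
  have h1 : ∀ c : OrderedFinpartition n,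
      iteratedDeriv c.length G (F x) * ∏ i, iteratedDeriv (c.partSize i) F x
        = (fun m : Multiset ℕ => iteratedDeriv m.card G (F x)
            * (m.map fun s => iteratedDeriv s F x).prod) (Mp c) := by
    intro c
    simp only
    rw [Mp_card, prod_fin_eq_map_prod c (fun s => iteratedDeriv s F x)]
  rw [Finset.sum_congr rfl fun c _ => h1 c]
  rw [key n (fun m : Multiset ℕ => iteratedDeriv m.card G (F x)
      * (m.map fun s => iteratedDeriv s F x).prod)]
  exact conv n (fun r => iteratedDeriv r G (F x)) (fun s => iteratedDeriv s F x)
end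

section
/- Let R be a commutative ℚ-algebra, and let F, G be formal power series over R with coefficients f_m = coeff_m(F) and g_m = coeff_m(G), where the constant coefficient of F is zero (f₀ = 0). Then for every n ≥ 1, the n-th coefficient of the composition G ∘ F (substitution of F into G) equals Σ (multinomial coefficient (k₁+⋯+k_n)!/(k₁!···k_n!)) · g_{k₁+⋯+k_n} · ∏_{i=1}^{n} f_i^{k_i}, where the sum ranges over all tuples (k₁,…,k_n) of nonnegative integers with k₁ + 2k₂ + ⋯ + n·k_n = n. -/
/-- The composition (substitution) `G ∘ F` of formal power series: substituting `F` into
`G`.  When the constant coefficient of `F` vanishes, the coefficient of `Xⁿ` in `G ∘ F`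
is the (finite) sum `∑_{k ≤ n} gₖ · coeff n (Fᵏ)`, since `Fᵏ` has order at least `k`. -/
noncomputable def PowerSeries.comp {R : Type*} [CommRing R] (G F : PowerSeries R) :
    PowerSeries R :=
  PowerSeries.mk fun n =>
    ∑ k ∈ Finset.range (n + 1), PowerSeries.coeff k G * PowerSeries.coeff n (F ^ k)

open Finset PowerSeries

/-- If two power series agree in all coefficients up to `n`, so do their `m`-th powers. -/
lemma coeff_pow_congr_aux {R : Type*} [CommRing R] (A B : PowerSeries R) (n m : ℕ)
    (h : ∀ j ≤ n, coeff j A = coeff j B) :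
    coeff n (A ^ m) = coeff n (B ^ m) := by
  rw [coeff_pow, coeff_pow]
  refine Finset.sum_congr rfl fun l hl => Finset.prod_congr rfl fun i hi => ?_
  rw [mem_finsuppAntidiag] at hl
  exact h _ (hl.1 ▸ Finset.single_le_sum (f := fun j => l j) (fun _ _ => Nat.zero_le _) hi)

/-- For formal power series `F, G` over a commutative `ℚ`-algebra `R`, with the constant
coefficient of `F` equal to zero, the `n`-th coefficient (`n ≥ 1`) of the composition
`G ∘ F` equals the sum, over all tuples `(k₁, …, kₙ)` of nonnegative integers with
`k₁ + 2k₂ + ⋯ + n·kₙ = n`, of the multinomial coefficient `(k₁+⋯+kₙ)!/(k₁!⋯kₙ!)` times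
`g_{k₁+⋯+kₙ} · ∏ᵢ fᵢ^{kᵢ}`. -/
theorem coeff_comp_eq_sum_multinomial {R : Type*} [CommRing R] [Algebra ℚ R]
    (F G : PowerSeries R) (hF : PowerSeries.coeff 0 F = 0) (n : ℕ) (hn : 1 ≤ n) :
    PowerSeries.coeff n (PowerSeries.comp G F) =
      ∑ k ∈ (Fintype.piFinset fun _ : Fin n => Finset.range (n + 1)).filter
          (fun k : Fin n → ℕ => ∑ i, (i.1 + 1) * k i = n),
        (Nat.multinomial Finset.univ k : R) *
          PowerSeries.coeff (∑ i, k i) G *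
          ∏ i, PowerSeries.coeff (i.1 + 1) F ^ k i := by
  classical
  set S := (Fintype.piFinset fun _ : Fin n => Finset.range (n + 1)).filter
      (fun k : Fin n → ℕ => ∑ i, (i.1 + 1) * k i = n) with hS
  -- the truncation of F to degrees 1..n
  set T : PowerSeries R := ∑ i : Fin n, PowerSeries.C (coeff (i.1 + 1) F) * X ^ (i.1 + 1)
    with hT
  have hcoeffT : ∀ j ≤ n, coeff j F = coeff j T := by
    intro j hj
    rw [hT, map_sum]
    simp only [map_mul, PowerSeries.coeff_C_mul, PowerSeries.coeff_X_pow]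
    rcases Nat.eq_zero_or_pos j with rfl | hj1
    · rw [hF]
      refine (Finset.sum_eq_zero fun i _ => ?_).symm
      simp
    · rw [Finset.sum_eq_single (⟨j - 1, by omega⟩ : Fin n)]
      · simp [show j - 1 + 1 = j by omega]
      · intro b _ hb
        have : j ≠ b.1 + 1 := by
          intro h; apply hb; apply Fin.ext; simp; omega
        rw [if_neg this, mul_zero]
      · simp
  -- key computation of coeff n (F ^ m)
  have hpow : ∀ m : ℕ, coeff n (F ^ m) =
      ∑ k ∈ S.filter (fun k => ∑ i, k i = m),
        (Nat.multinomial Finset.univ k : R) * ∏ i, coeff (i.1 + 1) F ^ k i := by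
    intro m
    rw [coeff_pow_congr_aux F T n m hcoeffT, hT,
      Finset.sum_pow_eq_sum_piAntidiag univ (fun i : Fin n => PowerSeries.C (coeff (i.1+1) F) * X ^ (i.1+1)) m]
    rw [map_sum]
    have hterm : ∀ k : Fin n → ℕ,
        coeff n ((Nat.multinomial Finset.univ k : PowerSeries R) *
          ∏ i : Fin n, (PowerSeries.C (coeff (i.1+1) F) * X ^ (i.1+1)) ^ k i) =
        if ∑ i, (i.1 + 1) * k i = n then
          (Nat.multinomial Finset.univ k : R) * ∏ i, coeff (i.1 + 1) F ^ k i
        else 0 := by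
      intro k
      have : ∏ i : Fin n, (PowerSeries.C (coeff (i.1+1) F) * X ^ (i.1+1)) ^ k i =
          PowerSeries.C (∏ i, coeff (i.1+1) F ^ k i) * X ^ (∑ i, (i.1+1) * k i) := by
        simp_rw [mul_pow, ← pow_mul, Finset.prod_mul_distrib, ← map_pow, ← map_prod,
          Finset.prod_pow_eq_pow_sum]
      rw [this, ← mul_assoc, mul_assoc, ← nsmul_eq_mul, map_nsmul, nsmul_eq_mul,
        PowerSeries.coeff_C_mul, PowerSeries.coeff_X_pow, ← mul_assoc]
      by_cases h : ∑ i, (i.1 + 1) * k i = n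
      · rw [if_pos h, if_pos h.symm, mul_one]
      · rw [if_neg h, if_neg (fun hh => h hh.symm), mul_zero]
    rw [Finset.sum_congr rfl fun k _ => hterm k, Finset.sum_ite, Finset.sum_const_zero, add_zero]
    apply Finset.sum_congr
    · ext k
      simp only [Finset.mem_filter, Finset.mem_piAntidiag, hS, Fintype.mem_piFinset,
        Finset.mem_range]
      constructor
      · rintro ⟨⟨hsum, -⟩, hP⟩
        refine ⟨⟨fun i => ?_, hP⟩, hsum⟩
        have h1 : (i.1 + 1) * k i ≤ n := by
          simpa [hP] using Finset.single_le_sum (f := fun i : Fin n => (i.1+1) * k i)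
            (fun _ _ => Nat.zero_le _) (Finset.mem_univ i)
        have h2 : k i ≤ (i.1 + 1) * k i := Nat.le_mul_of_pos_left _ (Nat.succ_pos _)
        omega
      · rintro ⟨⟨-, hP⟩, hsum⟩
        exact ⟨⟨hsum, fun _ _ => Finset.mem_univ _⟩, hP⟩
    · intro k _; rfl
  -- now assemble
  rw [PowerSeries.comp, PowerSeries.coeff_mk]
  calc ∑ m ∈ Finset.range (n + 1), coeff m G * coeff n (F ^ m)
      = ∑ m ∈ Finset.range (n + 1), ∑ k ∈ S.filter (fun k => ∑ i, k i = m),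
          (Nat.multinomial Finset.univ k : R) * coeff (∑ i, k i) G *
            ∏ i, coeff (i.1 + 1) F ^ k i := by
        refine Finset.sum_congr rfl fun m hm => ?_
        rw [hpow m, Finset.mul_sum]
        refine Finset.sum_congr rfl fun k hk => ?_
        rw [Finset.mem_filter] at hk
        rw [hk.2]
        ring
    _ = ∑ k ∈ S, (Nat.multinomial Finset.univ k : R) * coeff (∑ i, k i) G *
          ∏ i, coeff (i.1 + 1) F ^ k i := by
        apply Finset.sum_fiberwise_of_maps_to
        intro k hk
        rw [hS, Finset.mem_filter] at hk
        rw [Finset.mem_range]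
        have : ∑ i, k i ≤ ∑ i, (i.1 + 1) * k i :=
          Finset.sum_le_sum fun i _ => Nat.le_mul_of_pos_left _ (Nat.succ_pos _)
        omega
end
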